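/- arXiv:1909.02540 — 2 statements merged into one kernel-verified Lean document; each statement's English description precedes it below -/
import Mathlib

section
/- Let ρ̂ be a full-rank density matrix on ℂ^d, let F be a nonempty closed set of density matrices on ℂ^d with R_F(ρ̂) < ∞, let n ≥ 1, and let F_n be a closed set of density matrices on ℂ^{d^n} such that ω^{⊗n} ∈ F_n for every ω ∈ F. Let F' be a set of density matrices on ℂ^{d'} and let (L, G) be a probabilistic free protocol from (F_n, ℂ^{d^n}) to (F', ℂ^{d'}). Suppose p := Tr(L(ρ̂^{⊗n})) > 0 and the output τ := L(ρ̂^{⊗n})/p satisfies ⟨ψ, τ ψ⟩ ≥ 1 − ε for a unit vector ψ ∈ ℂ^{d'} and ε ≥ 0. Then ε/p ≥ λ_min(ρ̂)^n · (1 − f_ψ)/(1 + R_F(ρ̂))^n, where f_ψ := sup_{ω ∈ F'} ⟨ψ, ω ψ⟩. (Theorem 2, probabilistic case: overhead bound n ≥ log_{(1+R(ρ̂))/λ_min(ρ̂)}((1−f_ψ)p/ε).) -/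
open scoped Matrix ComplexOrder

noncomputable section

/-- A density matrix: a positive semidefinite complex matrix with unit trace. -/
def IsDensity {n : Type*} [Fintype n] (A : Matrix n n ℂ) : Prop :=
  A.PosSemidef ∧ A.trace = 1

/-- The smallest eigenvalue of a Hermitian matrix (`0` by convention otherwise). -/
noncomputable def minEig {n : Type*} [Fintype n] [DecidableEq n] (A : Matrix n n ℂ) : ℝ :=
  letI := Classical.propDecidable A.IsHermitian
  if h : A.IsHermitian then ⨅ i, h.eigenvalues i else 0

/-- The overlap `⟨ψ, A ψ⟩` (as a real number). -/
noncomputable def overlap {n : Type*} [Fintype n] (A : Matrix n n ℂ) (ψ : n → ℂ) : ℝ :=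
  (dotProduct (star ψ) (A.mulVec ψ)).re

/-- `f_ψ = sup_{ω ∈ F} ⟨ψ, ω ψ⟩`, with the convention `sup ∅ = 0`. -/
noncomputable def maxOverlap {n : Type*} [Fintype n] (F : Set (Matrix n n ℂ)) (ψ : n → ℂ) : ℝ :=
  sSup ((fun ω => overlap ω ψ) '' F)

/-- A positive map: it sends positive semidefinite matrices to positive semidefinite matrices. -/
def PosMap {n m : Type*} [Fintype n] [Fintype m]
    (Φ : Matrix n n ℂ →ₗ[ℂ] Matrix m m ℂ) : Prop :=
  ∀ X, X.PosSemidef → (Φ X).PosSemidef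

/-- A trace-preserving map. -/
def TracePreserving {n m : Type*} [Fintype n] [Fintype m]
    (Φ : Matrix n n ℂ →ₗ[ℂ] Matrix m m ℂ) : Prop :=
  ∀ X, (Φ X).trace = X.trace

/-- The feasible set for the generalized robustness:
`{ s ≥ 0 : ∃ density σ, (ρ + sσ)/(1+s) ∈ F }`.  Its nonemptiness encodes `R_F(ρ) < ∞`. -/
def RobustSet {n : Type*} [Fintype n] (F : Set (Matrix n n ℂ)) (ρ : Matrix n n ℂ) : Set ℝ :=
  {s : ℝ | 0 ≤ s ∧ ∃ σ : Matrix n n ℂ, IsDensity σ ∧ (1 + s)⁻¹ • (ρ + s • σ) ∈ F}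

/-- The generalized robustness `R_F(ρ)`. -/
noncomputable def Robustness {n : Type*} [Fintype n] (F : Set (Matrix n n ℂ))
    (ρ : Matrix n n ℂ) : ℝ :=
  sInf (RobustSet F ρ)

/-- The `n`-fold Kronecker power of a `d × d` matrix, realized on the index type
`Fin n → Fin d` (canonically identifying `ℂ^{d^n} ≅ (ℂ^d)^{⊗n}`). -/
noncomputable def kronPow {d : ℕ} (A : Matrix (Fin d) (Fin d) ℂ) (n : ℕ) :
    Matrix (Fin n → Fin d) (Fin n → Fin d) ℂ :=
  Matrix.of fun x y => ∏ i, A (x i) (y i)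


section Aux
set_option linter.unusedSectionVars false

open Matrix

set_option maxHeartbeats 1000000

variable {m : Type*} [Fintype m] [DecidableEq m]

lemma real_smul_eq (r : ℝ) (A : Matrix m m ℂ) : r • A = (r : ℂ) • A := by
  ext i j; simp [Complex.real_smul]

lemma psd_smul {A : Matrix m m ℂ} (hA : A.PosSemidef) {r : ℝ} (hr : 0 ≤ r) :
    (r • A).PosSemidef := by
  rw [real_smul_eq]
  refine Matrix.PosSemidef.of_dotProduct_mulVec_nonneg ?_ fun x => ?_
  · rw [Matrix.IsHermitian, conjTranspose_smul, hA.1]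
    congr 1
    exact Complex.conj_ofReal r
  · rw [smul_mulVec, dotProduct_smul, smul_eq_mul]
    exact mul_nonneg (Complex.zero_le_real.mpr hr) (hA.dotProduct_mulVec_nonneg x)

lemma psd_trace_nonneg {A : Matrix m m ℂ} (hA : A.PosSemidef) : 0 ≤ A.trace := by
  rw [Matrix.trace]
  refine Finset.sum_nonneg fun i _ => ?_
  have h := hA.dotProduct_mulVec_nonneg (Pi.single i 1)
  simpa [dotProduct, Matrix.mulVec_single, Pi.single_apply, apply_ite] using h

lemma psd_trace_re_nonneg {A : Matrix m m ℂ} (hA : A.PosSemidef) : 0 ≤ A.trace.re :=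
  (Complex.le_def.mp (psd_trace_nonneg hA)).1

lemma overlap_nonneg {A : Matrix m m ℂ} (hA : A.PosSemidef) (ψ : m → ℂ) :
    0 ≤ overlap A ψ :=
  (Complex.le_def.mp (hA.dotProduct_mulVec_nonneg ψ)).1

lemma overlap_sub (A B : Matrix m m ℂ) (ψ : m → ℂ) :
    overlap (A - B) ψ = overlap A ψ - overlap B ψ := by
  unfold overlap
  rw [Matrix.sub_mulVec, dotProduct_sub, Complex.sub_re]

lemma overlap_real_smul (r : ℝ) (A : Matrix m m ℂ) (ψ : m → ℂ) :
    overlap (r • A) ψ = r * overlap A ψ := by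
  unfold overlap
  rw [real_smul_eq, Matrix.smul_mulVec, dotProduct_smul, smul_eq_mul]
  simp [Complex.mul_re]

lemma trace_re_real_smul (r : ℝ) (A : Matrix m m ℂ) :
    ((r • A).trace).re = r * A.trace.re := by
  rw [real_smul_eq, Matrix.trace_smul, smul_eq_mul]
  simp [Complex.mul_re]

lemma trace_re_sub (A B : Matrix m m ℂ) :
    ((A - B).trace).re = A.trace.re - B.trace.re := by
  rw [Matrix.trace_sub, Complex.sub_re]

section PSDAux
open scoped MatrixOrder Matrix.Norms.L2Operator

lemma posSemidef_iff_eq_transpose_mul_self {A : Matrix m m ℂ} :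
    A.PosSemidef ↔ ∃ B : Matrix m m ℂ, A = Bᴴ * B := by
  constructor
  · intro hA
    obtain ⟨B, rfl⟩ := CStarAlgebra.nonneg_iff_eq_star_mul_self.mp hA.nonneg
    exact ⟨B, rfl⟩
  · rintro ⟨B, rfl⟩
    exact posSemidef_conjTranspose_mul_self B

end PSDAux

lemma trace_mul_psd_nonneg {A C : Matrix m m ℂ} (hA : A.PosSemidef) (hC : C.PosSemidef) :
    0 ≤ (A * C).trace := by
  obtain ⟨B, rfl⟩ := posSemidef_iff_eq_transpose_mul_self.mp hC
  have h : A * (Bᴴ * B) = (A * Bᴴ) * B := by rw [mul_assoc]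
  rw [h, Matrix.trace_mul_comm, ← mul_assoc]
  exact psd_trace_nonneg (hA.mul_mul_conjTranspose_same B)

lemma proj_psd_compl {ψ : m → ℂ} (hψ : dotProduct (star ψ) ψ = 1) :
    ((1 : Matrix m m ℂ) - vecMulVec ψ (star ψ)).PosSemidef := by
  set P : Matrix m m ℂ := vecMulVec ψ (star ψ) with hP
  have hPH : Pᴴ = P := by
    ext i j
    simp [hP, vecMulVec_apply, mul_comm]
  have hPP : P * P = P := by
    ext i j
    simp only [Matrix.mul_apply, hP, vecMulVec_apply, Pi.star_apply]
    calc ∑ k, ψ i * star (ψ k) * (ψ k * star (ψ j))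
        = (ψ i * star (ψ j)) * ∑ k, star (ψ k) * ψ k := by
          rw [Finset.mul_sum]; exact Finset.sum_congr rfl fun k _ => by ring
      _ = ψ i * star (ψ j) := by
          rw [show ∑ k, star (ψ k) * ψ k = dotProduct (star ψ) ψ from rfl, hψ, mul_one]
  refine posSemidef_iff_eq_transpose_mul_self.mpr ⟨1 - P, ?_⟩
  rw [conjTranspose_sub, conjTranspose_one, hPH, sub_mul, one_mul, mul_sub]
  rw [mul_one, hPP, sub_self, sub_zero]

lemma trace_mul_proj (A : Matrix m m ℂ) (ψ : m → ℂ) :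
    (A * vecMulVec ψ (star ψ)).trace = dotProduct (star ψ) (A.mulVec ψ) := by
  simp only [Matrix.trace, Matrix.diag, Matrix.mul_apply, vecMulVec_apply, Pi.star_apply,
    dotProduct, Matrix.mulVec, Finset.mul_sum]
  exact Finset.sum_congr rfl fun i _ => Finset.sum_congr rfl fun j _ => by ring

lemma overlap_le_trace_re {A : Matrix m m ℂ} (hA : A.PosSemidef) {ψ : m → ℂ}
    (hψ : dotProduct (star ψ) ψ = 1) : overlap A ψ ≤ A.trace.re := by
  have h1 := trace_mul_psd_nonneg hA (proj_psd_compl hψ)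
  have h2 : (A * ((1 : Matrix m m ℂ) - vecMulVec ψ (star ψ))).trace
      = A.trace - dotProduct (star ψ) (A.mulVec ψ) := by
    rw [mul_sub, mul_one, Matrix.trace_sub, trace_mul_proj]
  rw [h2] at h1
  have h3 := (Complex.le_def.mp h1).1
  simp only [Complex.zero_re, Complex.sub_re] at h3
  unfold overlap
  linarith

lemma spectral_shift {A : Matrix m m ℂ} (hA : A.IsHermitian) (c : ℝ) :
    A - c • (1 : Matrix m m ℂ) = (hA.eigenvectorUnitary : Matrix m m ℂ) *
      Matrix.diagonal (fun i => ((hA.eigenvalues i - c : ℝ) : ℂ)) *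
      (hA.eigenvectorUnitary : Matrix m m ℂ)ᴴ := by
  set U : Matrix m m ℂ := (hA.eigenvectorUnitary : Matrix m m ℂ) with hUdef
  have hU : U * Uᴴ = 1 := by
    rw [hUdef, ← Matrix.star_eq_conjTranspose]
    exact Matrix.mem_unitaryGroup_iff.mp hA.eigenvectorUnitary.2
  have h1 : c • (1 : Matrix m m ℂ) = U * Matrix.diagonal (fun _ => (c : ℂ)) * Uᴴ := by
    have hd : Matrix.diagonal (fun _ : m => (c : ℂ)) = (c : ℂ) • (1 : Matrix m m ℂ) :=
      (Matrix.smul_one_eq_diagonal _).symm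
    rw [real_smul_eq, hd, Matrix.mul_smul, Matrix.smul_mul, Matrix.mul_one, hU]
  have hdiag : Matrix.diagonal (fun i => ((hA.eigenvalues i - c : ℝ) : ℂ))
      = Matrix.diagonal (RCLike.ofReal ∘ hA.eigenvalues) - Matrix.diagonal (fun _ => (c : ℂ)) := by
    rw [Matrix.diagonal_sub]
    congr 1
    ext i
    simp [Function.comp, RCLike.ofReal_alg]
  rw [hdiag, Matrix.mul_sub, Matrix.sub_mul, ← h1]
  congr 1
  conv_lhs => rw [hA.spectral_theorem, Unitary.conjStarAlgAut_apply]
  rw [hUdef, Matrix.star_eq_conjTranspose]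

lemma spectral_shift' {A : Matrix m m ℂ} (hA : A.IsHermitian) (c : ℝ) :
    c • (1 : Matrix m m ℂ) - A = (hA.eigenvectorUnitary : Matrix m m ℂ) *
      Matrix.diagonal (fun i => ((c - hA.eigenvalues i : ℝ) : ℂ)) *
      (hA.eigenvectorUnitary : Matrix m m ℂ)ᴴ := by
  have h0 : c • (1 : Matrix m m ℂ) - A = -(A - c • 1) := (neg_sub _ _).symm
  rw [h0, spectral_shift hA c, ← Matrix.neg_mul, ← Matrix.mul_neg]
  congr 2
  have hfun : (fun i => ((c - hA.eigenvalues i : ℝ) : ℂ))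
      = fun i => -(((hA.eigenvalues i - c : ℝ) : ℂ)) := funext fun i => by push_cast; ring
  rw [hfun, ← Matrix.diagonal_neg]

lemma psd_of_eig_le {A : Matrix m m ℂ} (hA : A.IsHermitian) {c : ℝ}
    (h : ∀ i, c ≤ hA.eigenvalues i) : (A - c • (1 : Matrix m m ℂ)).PosSemidef := by
  rw [spectral_shift hA c]
  refine Matrix.PosSemidef.mul_mul_conjTranspose_same ?_ _
  exact Matrix.posSemidef_diagonal_iff.mpr fun i =>
    Complex.zero_le_real.mpr (by linarith [h i])

lemma psd_of_eig_ge {A : Matrix m m ℂ} (hA : A.IsHermitian) {c : ℝ}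
    (h : ∀ i, hA.eigenvalues i ≤ c) : (c • (1 : Matrix m m ℂ) - A).PosSemidef := by
  rw [spectral_shift' hA c]
  refine Matrix.PosSemidef.mul_mul_conjTranspose_same ?_ _
  exact Matrix.posSemidef_diagonal_iff.mpr fun i =>
    Complex.zero_le_real.mpr (by linarith [h i])

lemma sum_eigenvalues_eq_trace {A : Matrix m m ℂ} (hA : A.IsHermitian) :
    ((∑ i, hA.eigenvalues i : ℝ) : ℂ) = A.trace := by
  conv_rhs => rw [hA.spectral_theorem, Unitary.conjStarAlgAut_apply]
  rw [Matrix.trace_mul_cycle, Matrix.mem_unitaryGroup_iff'.mp hA.eigenvectorUnitary.2,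
    one_mul, Matrix.trace_diagonal]
  push_cast
  simp [Function.comp, RCLike.ofReal_alg]

lemma density_eig_le_one {A : Matrix m m ℂ} (hA : IsDensity A) (i : m) :
    hA.1.1.eigenvalues i ≤ 1 := by
  have hsum : (∑ j, hA.1.1.eigenvalues j) = 1 := by
    have h2 := (sum_eigenvalues_eq_trace hA.1.1).trans hA.2
    exact_mod_cast h2
  have hnn : ∀ j, 0 ≤ hA.1.1.eigenvalues j := fun j => hA.1.eigenvalues_nonneg j
  calc hA.1.1.eigenvalues i ≤ ∑ j, hA.1.1.eigenvalues j :=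
        Finset.single_le_sum (fun j _ => hnn j) (Finset.mem_univ i)
    _ = 1 := hsum

lemma density_one_sub_psd {A : Matrix m m ℂ} (hA : IsDensity A) :
    ((1 : ℝ) • (1 : Matrix m m ℂ) - A).PosSemidef :=
  psd_of_eig_ge hA.1.1 (density_eig_le_one hA)

lemma minEig_le_eig {A : Matrix m m ℂ} (hA : A.IsHermitian) (i : m) :
    minEig A ≤ hA.eigenvalues i := by
  rw [minEig]
  letI := Classical.propDecidable A.IsHermitian
  rw [dif_pos hA]
  exact ciInf_le (Set.Finite.bddBelow (Set.finite_range _)) i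

lemma minEig_psd_sub {A : Matrix m m ℂ} (hA : A.IsHermitian) :
    (A - minEig A • (1 : Matrix m m ℂ)).PosSemidef :=
  psd_of_eig_le hA (minEig_le_eig hA)

lemma nonempty_of_minEig_pos {A : Matrix m m ℂ} (h : 0 < minEig A) : Nonempty m := by
  by_contra hc
  rw [not_nonempty_iff] at hc
  rw [minEig] at h
  letI := Classical.propDecidable A.IsHermitian
  rcases Classical.em A.IsHermitian with hh | hh
  · rw [dif_pos hh] at h
    rw [Real.iInf_of_isEmpty] at h
    exact lt_irrefl _ h
  · rw [dif_neg hh] at h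
    exact lt_irrefl _ h

lemma minEig_le_one {A : Matrix m m ℂ} (hA : IsDensity A) (h : 0 < minEig A) :
    minEig A ≤ 1 := by
  have hne : Nonempty m := nonempty_of_minEig_pos h
  obtain ⟨i⟩ := hne
  exact le_trans (minEig_le_eig hA.1.1 i) (density_eig_le_one hA i)

lemma piProd_posSemidef {d n : ℕ} (M : Fin n → Matrix (Fin d) (Fin d) ℂ)
    (hM : ∀ i, (M i).PosSemidef) :
    (Matrix.of fun x y : Fin n → Fin d => ∏ i, M i (x i) (y i)).PosSemidef := by
  choose C hC using fun i => posSemidef_iff_eq_transpose_mul_self.mp (hM i)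
  refine posSemidef_iff_eq_transpose_mul_self.mpr
    ⟨Matrix.of fun x y : Fin n → Fin d => ∏ i, C i (x i) (y i), ?_⟩
  ext x y
  simp only [Matrix.of_apply, Matrix.mul_apply, Matrix.conjTranspose_apply]
  calc ∏ i, M i (x i) (y i)
      = ∏ i, ∑ k, star (C i k (x i)) * C i k (y i) := by
        refine Finset.prod_congr rfl fun i _ => ?_
        rw [hC i]
        simp [Matrix.mul_apply, Matrix.conjTranspose_apply]
    _ = ∑ k : Fin n → Fin d, ∏ i, star (C i (k i) (x i)) * C i (k i) (y i) := by
        rw [Finset.prod_univ_sum]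
        rw [Fintype.piFinset_univ]
    _ = ∑ k : Fin n → Fin d,
          star ((Matrix.of fun x y : Fin n → Fin d => ∏ i, C i (x i) (y i)) k x) *
          (Matrix.of fun x y : Fin n → Fin d => ∏ i, C i (x i) (y i)) k y := by
        refine Finset.sum_congr rfl fun k _ => ?_
        simp [star_prod, Finset.prod_mul_distrib]

lemma kronPow_posSemidef {d n : ℕ} {A : Matrix (Fin d) (Fin d) ℂ} (hA : A.PosSemidef) :
    (kronPow A n).PosSemidef :=
  piProd_posSemidef (fun _ => A) (fun _ => hA)

lemma kronPow_trace {d n : ℕ} (A : Matrix (Fin d) (Fin d) ℂ) :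
    (kronPow A n).trace = A.trace ^ n := by
  simp only [Matrix.trace, Matrix.diag, kronPow, Matrix.of_apply]
  rw [← Fintype.piFinset_univ,
    ← Finset.prod_univ_sum (fun _ : Fin n => (Finset.univ : Finset (Fin d))) (fun _ j => A j j)]
  simp [Finset.prod_const]

lemma kronPow_smul {d n : ℕ} (c : ℂ) (A : Matrix (Fin d) (Fin d) ℂ) :
    kronPow (c • A) n = c ^ n • kronPow A n := by
  ext x y
  simp [kronPow, Finset.prod_mul_distrib, Finset.prod_const]

lemma kronPow_sub_psd {d : ℕ} {A B : Matrix (Fin d) (Fin d) ℂ} (hB : B.PosSemidef)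
    (hAB : (A - B).PosSemidef) (n : ℕ) :
    (kronPow A n - kronPow B n).PosSemidef := by
  have hA : A.PosSemidef := by simpa using hAB.add hB
  set H : ℕ → Matrix (Fin n → Fin d) (Fin n → Fin d) ℂ := fun j =>
    Matrix.of fun x y => ∏ i : Fin n, (if (i : ℕ) < j then A else B) (x i) (y i) with hH
  have h0 : H 0 = kronPow B n := by
    ext x y; simp [hH, kronPow]
  have hn : H n = kronPow A n := by
    ext x y
    simp only [hH, kronPow, Matrix.of_apply]
    exact Finset.prod_congr rfl fun i _ => by rw [if_pos i.isLt]
  have key : ∀ j, (H (j + 1) - H j).PosSemidef := by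
    intro j
    by_cases hj : j < n
    · set j₀ : Fin n := ⟨j, hj⟩ with hj₀
      have heq : H (j + 1) - H j = Matrix.of fun x y : Fin n → Fin d =>
          ∏ i : Fin n,
            (if (i : ℕ) < j then A else if i = j₀ then A - B else B) (x i) (y i) := by
        ext x y
        simp only [hH, Matrix.sub_apply, Matrix.of_apply]
        rw [← Finset.mul_prod_erase Finset.univ
            (fun i : Fin n => (if (i : ℕ) < j + 1 then A else B) (x i) (y i))
            (Finset.mem_univ j₀),
          ← Finset.mul_prod_erase Finset.univ
            (fun i : Fin n => (if (i : ℕ) < j then A else B) (x i) (y i)) (Finset.mem_univ j₀),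
          ← Finset.mul_prod_erase Finset.univ
            (fun i : Fin n =>
              (if (i : ℕ) < j then A else if i = j₀ then A - B else B) (x i) (y i))
            (Finset.mem_univ j₀)]
        have e1 : ∀ i ∈ Finset.univ.erase j₀,
            (if (i : ℕ) < j + 1 then A else B) (x i) (y i)
              = (if (i : ℕ) < j then A else B) (x i) (y i) := by
          intro i hi
          have hij : (i : ℕ) ≠ j := fun h => (Finset.mem_erase.mp hi).1 (Fin.ext h)
          by_cases h : (i : ℕ) < j
          · rw [if_pos h, if_pos (Nat.lt_succ_of_lt h)]
          · rw [if_neg h, if_neg (fun hlt => h (lt_of_le_of_ne (Nat.lt_succ_iff.mp hlt) hij))]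
        have e2 : ∀ i ∈ Finset.univ.erase j₀,
            (if (i : ℕ) < j then A else if i = j₀ then A - B else B) (x i) (y i)
              = (if (i : ℕ) < j then A else B) (x i) (y i) := by
          intro i hi
          by_cases h : (i : ℕ) < j
          · rw [if_pos h, if_pos h]
          · rw [if_neg h, if_neg h, if_neg (Finset.mem_erase.mp hi).1]
        rw [Finset.prod_congr rfl e1, Finset.prod_congr rfl e2]
        have hx1 : ((j₀ : ℕ) < j + 1) := Nat.lt_succ_self j
        have hx2 : ¬((j₀ : ℕ) < j) := lt_irrefl j
        rw [if_pos hx1, if_neg hx2, if_neg hx2, if_pos rfl, Matrix.sub_apply]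
        ring
      rw [heq]
      refine piProd_posSemidef _ fun i => ?_
      split_ifs
      · exact hA
      · exact hAB
      · exact hB
    · have heq : H (j + 1) = H j := by
        ext x y
        simp only [hH, Matrix.of_apply]
        refine Finset.prod_congr rfl fun i _ => ?_
        have h1 : (i : ℕ) < j + 1 := Nat.lt_succ_of_lt (lt_of_lt_of_le i.isLt (not_lt.mp hj))
        have h2 : (i : ℕ) < j := lt_of_lt_of_le i.isLt (not_lt.mp hj)
        rw [if_pos h1, if_pos h2]
      rw [heq, sub_self]
      exact Matrix.PosSemidef.zero
  have tele : kronPow A n - kronPow B n = ∑ j ∈ Finset.range n, (H (j + 1) - H j) := by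
    rw [Finset.sum_range_sub H, h0, hn]
  rw [tele]
  exact Finset.sum_induction _ _ (fun a b ha hb => ha.add hb) Matrix.PosSemidef.zero
    fun j _ => key j

end Aux

set_option maxHeartbeats 1600000 in
/-- **Theorem 2, probabilistic case.**  Lower bound on the distillation overhead of probabilistic
protocols: `ε/p ≥ λ_min(ρ̂)^n (1 - f_ψ)/(1 + R_F(ρ̂))^n`. -/
theorem distillation_overhead_probabilistic {d d' : ℕ}
    (ρhat : Matrix (Fin d) (Fin d) ℂ) (hρ : IsDensity ρhat) (hρfull : 0 < minEig ρhat)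
    (F : Set (Matrix (Fin d) (Fin d) ℂ)) (hFne : F.Nonempty) (hFcl : IsClosed F)
    (hFden : ∀ ω ∈ F, IsDensity ω)
    (hRfin : (RobustSet F ρhat).Nonempty)
    (n : ℕ) (hn : 1 ≤ n)
    (Fn : Set (Matrix (Fin n → Fin d) (Fin n → Fin d) ℂ)) (hFncl : IsClosed Fn)
    (hFnden : ∀ ω ∈ Fn, IsDensity ω)
    (hFnpow : ∀ ω ∈ F, kronPow ω n ∈ Fn)
    (F' : Set (Matrix (Fin d') (Fin d') ℂ)) (hF'den : ∀ ω ∈ F', IsDensity ω)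
    (L G : Matrix (Fin n → Fin d) (Fin n → Fin d) ℂ →ₗ[ℂ] Matrix (Fin d') (Fin d') ℂ)
    (hLpos : PosMap L) (hGpos : PosMap G)
    (hTP : ∀ X, (L X).trace + (G X).trace = X.trace)
    (hLfree : ∀ ω ∈ Fn, ∃ t : ℝ, 0 ≤ t ∧ ∃ ω' ∈ F', L ω = (t : ℂ) • ω')
    (p : ℝ) (hp : p = ((L (kronPow ρhat n)).trace).re) (hppos : 0 < p)
    (τ : Matrix (Fin d') (Fin d') ℂ) (hτ : τ = p⁻¹ • L (kronPow ρhat n))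
    (ψ : Fin d' → ℂ) (hψ : dotProduct (star ψ) ψ = 1)
    (ε : ℝ) (hε : 0 ≤ ε)
    (hfid : 1 - ε ≤ overlap τ ψ) :
    minEig ρhat ^ n * (1 - maxOverlap F' ψ) / (1 + Robustness F ρhat) ^ n ≤ ε / p := by
  classical
  have hherm : ρhat.IsHermitian := hρ.1.1
  set lam := minEig ρhat with hlam
  have hlam0 : 0 < lam := hρfull
  have hlam1 : lam ≤ 1 := minEig_le_one hρ hρfull
  set f := maxOverlap F' ψ with hfdef
  have hbdd : BddAbove ((fun ω => overlap ω ψ) '' F') := by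
    refine ⟨1, fun r hr => ?_⟩
    obtain ⟨ω', hω', rfl⟩ := hr
    have h1 := overlap_le_trace_re (hF'den ω' hω').1 hψ
    rw [(hF'den ω' hω').2] at h1
    simpa using h1
  have hkρ_psd : (kronPow ρhat n).PosSemidef := kronPow_posSemidef hρ.1
  have hLreal : ∀ (r : ℝ) (X : Matrix (Fin n → Fin d) (Fin n → Fin d) ℂ),
      L (r • X) = r • L X := by
    intro r X
    rw [real_smul_eq, map_smul, ← real_smul_eq]
  have hp1 : p ≤ 1 := by
    have h1 := hTP (kronPow ρhat n)
    have h2 : (kronPow ρhat n).trace = 1 := by rw [kronPow_trace, hρ.2, one_pow]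
    rw [h2] at h1
    have h3 : 0 ≤ ((G (kronPow ρhat n)).trace).re := psd_trace_re_nonneg (hGpos _ hkρ_psd)
    have h4 := congrArg Complex.re h1
    simp only [Complex.add_re, Complex.one_re] at h4
    rw [hp]
    linarith
  have hεp : 0 ≤ ε / p := div_nonneg hε hppos.le
  -- the key per-element bound
  have key : ∀ s ∈ RobustSet F ρhat, lam ^ n * (1 - f) ≤ (ε / p) * (1 + s) ^ n := by
    rintro s ⟨hs0, σ, hσ, hωF⟩
    have hs1 : (0 : ℝ) < 1 + s := by linarith
    by_cases hf1 : 1 - f < 0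
    · have h1 : lam ^ n * (1 - f) ≤ 0 :=
        mul_nonpos_of_nonneg_of_nonpos (pow_nonneg hlam0.le n) (by linarith)
      have h2 : 0 ≤ (ε / p) * (1 + s) ^ n :=
        mul_nonneg hεp (pow_nonneg hs1.le n)
      linarith
    push_neg at hf1
    set ω : Matrix (Fin d) (Fin d) ℂ := (1 + s)⁻¹ • (ρhat + s • σ) with hωdef
    have hωden : IsDensity ω := hFden _ hωF
    set X : Matrix (Fin d) (Fin d) ℂ := ρhat + s • σ with hXdef
    have hX1 : X = (1 + s) • ω := by
      rw [hωdef, smul_smul, mul_inv_cancel₀ hs1.ne', one_smul]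
    have hXpsd : X.PosSemidef := hρ.1.add (psd_smul hσ.1 hs0)
    have h2 : (X - ρhat).PosSemidef := by
      have hXe : X - ρhat = s • σ := by rw [hXdef]; abel
      rw [hXe]; exact psd_smul hσ.1 hs0
    have hrls : (ρhat - lam • σ).PosSemidef := by
      have hone := density_one_sub_psd hσ
      have hzz := minEig_psd_sub hherm
      have hz2 := psd_smul hone hlam0.le
      have heq : ρhat - lam • σ
          = (ρhat - lam • (1 : Matrix (Fin d) (Fin d) ℂ))
            + lam • ((1 : ℝ) • (1 : Matrix (Fin d) (Fin d) ℂ) - σ) := by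
        rw [smul_sub, one_smul]; abel
      rw [heq]
      exact hzz.add hz2
    have h3 : (((lam + s) / lam) • ρhat - X).PosSemidef := by
      have heq : ((lam + s) / lam) • ρhat - X = (s / lam) • (ρhat - lam • σ) := by
        rw [hXdef, smul_sub, smul_smul, div_mul_cancel₀ _ hlam0.ne',
          show (lam + s) / lam = s / lam + 1 by field_simp; ring, add_smul, one_smul]
        abel
      rw [heq]; exact psd_smul hrls (div_nonneg hs0 hlam0.le)
    -- kron level
    have hkron1 : (kronPow X n - kronPow ρhat n).PosSemidef := kronPow_sub_psd hρ.1 h2 n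
    have hkron2 : (kronPow (((lam + s) / lam) • ρhat) n - kronPow X n).PosSemidef :=
      kronPow_sub_psd hXpsd h3 n
    have hksm1 : kronPow X n = ((1 + s) ^ n : ℝ) • kronPow ω n := by
      rw [hX1, real_smul_eq, kronPow_smul, real_smul_eq]
      norm_cast
    have hksm2 : kronPow (((lam + s) / lam) • ρhat) n
        = (((lam + s) / lam) ^ n : ℝ) • kronPow ρhat n := by
      rw [real_smul_eq, kronPow_smul, real_smul_eq]
      norm_cast
    set a : ℝ := (1 + s) ^ n with hadef
    set b : ℝ := ((lam + s) / lam) ^ n with hbdef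
    have ha0 : 0 < a := pow_pos hs1 n
    have hb0 : 0 < b := pow_pos (div_pos (by linarith) hlam0) n
    set M := L (kronPow ρhat n) with hMdef
    set K := L (kronPow ω n) with hKdef
    have hMpsd : M.PosSemidef := hLpos _ hkρ_psd
    obtain ⟨t, ht0, ω', hω'F', hLω⟩ := hLfree _ (hFnpow ω hωF)
    have hKeq : K = t • ω' := by rw [hKdef, hLω, real_smul_eq]
    have hT1 : (a • K - M).PosSemidef := by
      have hh := hLpos _ hkron1
      rwa [map_sub, hksm1, hLreal, ← hKdef, ← hMdef] at hh
    have hT2 : (b • M - a • K).PosSemidef := by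
      have hh := hLpos _ hkron2
      rwa [map_sub, hksm2, hksm1, hLreal, hLreal, ← hKdef, ← hMdef] at hh
    -- traces and overlaps
    have htrK : K.trace.re = t := by
      rw [hKeq, trace_re_real_smul, (hF'den ω' hω'F').2]
      simp
    have htrM : M.trace.re = p := hp.symm
    have hMτ : M = p • τ := by
      rw [hτ, smul_smul, mul_inv_cancel₀ hppos.ne', one_smul]
    have hoM : overlap M ψ = p * overlap τ ψ := by rw [hMτ, overlap_real_smul]
    have hoK : overlap K ψ = t * overlap ω' ψ := by rw [hKeq, overlap_real_smul]
    have hoω'f : overlap ω' ψ ≤ f := by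
      rw [hfdef, maxOverlap]
      exact le_csSup hbdd ⟨ω', hω'F', rfl⟩
    -- trace inequality from hT1
    have hpt : p ≤ a * t := by
      have hh := psd_trace_re_nonneg hT1
      rw [trace_re_sub, trace_re_real_smul, htrK, htrM] at hh
      linarith
    -- overlap ≤ trace for hT2
    have hg : overlap (b • M - a • K) ψ ≤ ((b • M - a • K).trace).re :=
      overlap_le_trace_re hT2 hψ
    rw [overlap_sub, overlap_real_smul, overlap_real_smul, hoM, hoK,
      trace_re_sub, trace_re_real_smul, trace_re_real_smul, htrM, htrK] at hg
    -- combine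
    have hτε : 1 - overlap τ ψ ≤ ε := by linarith
    have hchain : p * (1 - f) ≤ b * (p * ε) := by
      have hat0 : (0:ℝ) ≤ a * t := mul_nonneg ha0.le ht0
      have c1 : a * t * (1 - f) ≤ a * t * (1 - overlap ω' ψ) :=
        mul_le_mul_of_nonneg_left (by linarith) hat0
      have c2 : a * t * (1 - overlap ω' ψ) ≤ b * p * (1 - overlap τ ψ) := by nlinarith
      have c3 : b * p * (1 - overlap τ ψ) ≤ b * (p * ε) := by
        have h := mul_le_mul_of_nonneg_left hτε (mul_nonneg hb0.le hppos.le)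
        linarith [h]
      have c4 : p * (1 - f) ≤ a * t * (1 - f) :=
        mul_le_mul_of_nonneg_right hpt hf1
      linarith
    have h1f : 1 - f ≤ b * ε := by
      have hc : p * (1 - f) ≤ p * (b * ε) := by nlinarith [hchain]
      exact le_of_mul_le_mul_left hc hppos
    have hlb : lam ^ n * b = (lam + s) ^ n := by
      rw [hbdef, ← mul_pow, mul_div_cancel₀ _ hlam0.ne']
    have hls : (lam + s) ^ n ≤ (1 + s) ^ n :=
      pow_le_pow_left₀ (by linarith) (by linarith) n
    have hεεp : ε ≤ ε / p := by
      rw [le_div_iff₀ hppos]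
      nlinarith
    calc lam ^ n * (1 - f) ≤ lam ^ n * (b * ε) :=
          mul_le_mul_of_nonneg_left h1f (pow_nonneg hlam0.le n)
      _ = (lam + s) ^ n * ε := by rw [← hlb]; ring
      _ ≤ (1 + s) ^ n * ε := mul_le_mul_of_nonneg_right hls hε
      _ ≤ (1 + s) ^ n * (ε / p) := by
          have := pow_nonneg hs1.le n
          nlinarith
      _ = (ε / p) * (1 + s) ^ n := by ring
  -- pass to the infimum
  have hR0 : 0 ≤ Robustness F ρhat := le_csInf hRfin fun s hs => hs.1
  have hbddS : BddBelow (RobustSet F ρhat) := ⟨0, fun s hs => hs.1⟩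
  set φ : ℝ → ℝ := fun s => (ε / p) * (1 + max s 0) ^ n with hφdef
  have hmono : Monotone φ := by
    intro x y hxy
    have h1 : (1 + max x 0) ^ n ≤ (1 + max y 0) ^ n := by
      refine pow_le_pow_left₀ (by positivity) ?_ n
      have := max_le_max hxy (le_refl (0 : ℝ))
      linarith
    exact mul_le_mul_of_nonneg_left h1 hεp
  have hcont : ContinuousAt φ (sInf (RobustSet F ρhat)) := by
    refine Continuous.continuousAt ?_
    exact continuous_const.mul
      ((continuous_const.add (continuous_id.max continuous_const)).pow n)
  have himg := hmono.map_csInf_of_continuousAt hcont hRfin hbddS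
  have hmain : lam ^ n * (1 - f) ≤ φ (Robustness F ρhat) := by
    rw [Robustness, himg]
    refine le_csInf (hRfin.image _) ?_
    rintro r ⟨s, hs, rfl⟩
    have hk := key s hs
    simpa [hφdef, max_eq_left hs.1] using hk
  have hφR : φ (Robustness F ρhat) = (ε / p) * (1 + Robustness F ρhat) ^ n := by
    rw [hφdef]
    simp [max_eq_left hR0]
  rw [hφR] at hmain
  have hpow : (0 : ℝ) < (1 + Robustness F ρhat) ^ n := pow_pos (by linarith) n
  rw [div_le_iff₀ hpow]
  exact hmain
end
end

section
/- Let ρ be a full-rank density matrix on ℂ^d and let 0 ≤ ε < λ_min(ρ). If M is a d×d complex matrix with 0 ≤ M ≤ I in the Loewner order and Tr(ρ M) ≥ 1 − ε, then M − (1 − ε/λ_min(ρ))·I is positive semidefinite, i.e., every eigenvalue of M is at least 1 − ε/λ_min(ρ). (Key intermediate claim in the proof of Lemma S1.) -/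
open scoped Matrix ComplexOrder

noncomputable section

section helper
variable {n : Type*} [Fintype n] [DecidableEq n]

lemma trace_nonneg_of_psd {P : Matrix n n ℂ} (hP : P.PosSemidef) : 0 ≤ P.trace := by
  rw [Matrix.trace]
  refine Finset.sum_nonneg fun i _ => ?_
  exact hP.diag_nonneg

lemma trace_mul_nonneg_of_psd {P Q : Matrix n n ℂ} (hP : P.PosSemidef) (hQ : Q.PosSemidef) :
    0 ≤ (P * Q).trace := by
  obtain ⟨B, rfl⟩ : ∃ B : Matrix n n ℂ, Q = Bᴴ * B := by
    open scoped MatrixOrder in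
    exact CStarAlgebra.nonneg_iff_eq_star_mul_self.mp hQ.nonneg
  rw [← Matrix.mul_assoc, Matrix.trace_mul_cycle]
  exact trace_nonneg_of_psd (hP.mul_mul_conjTranspose_same B)

lemma trace_eq_sum_eig {A : Matrix n n ℂ} (hA : A.IsHermitian) :
    A.trace = ∑ i, (hA.eigenvalues i : ℂ) := by
  conv_lhs => rw [hA.spectral_theorem, Unitary.conjStarAlgAut_apply]
  rw [Matrix.trace_mul_cycle, Matrix.mem_unitaryGroup_iff'.mp
    (Matrix.IsHermitian.eigenvectorUnitary hA).2, Matrix.one_mul, Matrix.trace_diagonal]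
  rfl

lemma shift_psd {A : Matrix n n ℂ} (hA : A.IsHermitian) {c : ℝ}
    (h : ∀ i, c ≤ hA.eigenvalues i) : (A - c • 1).PosSemidef := by
  have hU := Matrix.mem_unitaryGroup_iff.mp (Matrix.IsHermitian.eigenvectorUnitary hA).2
  have hd : Matrix.diagonal (RCLike.ofReal ∘ hA.eigenvalues) - c • 1 =
      Matrix.diagonal (fun i => ((hA.eigenvalues i - c : ℝ) : ℂ)) := by
    ext i j
    by_cases hij : i = j <;>
      simp [Matrix.diagonal, Matrix.one_apply, hij, Complex.ofReal_sub]
  have key : A - c • 1 =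
      (hA.eigenvectorUnitary : Matrix n n ℂ) *
        Matrix.diagonal (fun i => ((hA.eigenvalues i - c : ℝ) : ℂ)) *
        star (hA.eigenvectorUnitary : Matrix n n ℂ) := by
    rw [← hd, Matrix.mul_sub, Matrix.sub_mul, mul_smul_comm, smul_mul_assoc, Matrix.mul_one,
      hU, ← Unitary.conjStarAlgAut_apply (S := ℂ), ← hA.spectral_theorem]
  rw [key, Matrix.star_eq_conjTranspose]
  refine Matrix.PosSemidef.mul_mul_conjTranspose_same ?_ _
  refine Matrix.posSemidef_diagonal_iff.mpr fun i => ?_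
  rw [Complex.zero_le_real]
  linarith [h i]

lemma shift_psd' {A : Matrix n n ℂ} (hA : A.IsHermitian) {c : ℝ}
    (h : ∀ i, hA.eigenvalues i ≤ c) : (c • 1 - A).PosSemidef := by
  have hU := Matrix.mem_unitaryGroup_iff.mp (Matrix.IsHermitian.eigenvectorUnitary hA).2
  have hd : (c • 1 : Matrix n n ℂ) - Matrix.diagonal (RCLike.ofReal ∘ hA.eigenvalues) =
      Matrix.diagonal (fun i => ((c - hA.eigenvalues i : ℝ) : ℂ)) := by
    ext i j
    by_cases hij : i = j <;>
      simp [Matrix.diagonal, Matrix.one_apply, hij, Complex.ofReal_sub]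
  have key : c • 1 - A =
      (hA.eigenvectorUnitary : Matrix n n ℂ) *
        Matrix.diagonal (fun i => ((c - hA.eigenvalues i : ℝ) : ℂ)) *
        star (hA.eigenvectorUnitary : Matrix n n ℂ) := by
    rw [← hd, Matrix.mul_sub, Matrix.sub_mul, mul_smul_comm, smul_mul_assoc, Matrix.mul_one,
      hU, ← Unitary.conjStarAlgAut_apply (S := ℂ), ← hA.spectral_theorem]
  rw [key, Matrix.star_eq_conjTranspose]
  refine Matrix.PosSemidef.mul_mul_conjTranspose_same ?_ _
  refine Matrix.posSemidef_diagonal_iff.mpr fun i => ?_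
  rw [Complex.zero_le_real]
  linarith [h i]

end helper

/-- Key intermediate claim in the proof of Lemma S1: any feasible test operator for a
full-rank state must be bounded below by `(1 - ε/λ_min(ρ)) · I`. -/
theorem feasible_test_lower_bound {d : ℕ}
    (ρ : Matrix (Fin d) (Fin d) ℂ) (hρ : IsDensity ρ) (hρfull : 0 < minEig ρ)
    (ε : ℝ) (hε : 0 ≤ ε) (hεlt : ε < minEig ρ)
    (M : Matrix (Fin d) (Fin d) ℂ) (hM0 : M.PosSemidef) (hM1 : (1 - M).PosSemidef)
    (htr : 1 - ε ≤ ((ρ * M).trace).re) :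
    (M - (1 - ε / minEig ρ) • (1 : Matrix (Fin d) (Fin d) ℂ)).PosSemidef := by
  have hρH : ρ.IsHermitian := hρ.1.1
  set lam := minEig ρ with hlam
  have hmin : ∀ i, lam ≤ hρH.eigenvalues i := by
    intro i
    rw [hlam]
    unfold minEig
    rw [dif_pos hρH]
    exact ciInf_le (Set.Finite.bddBelow (Set.finite_range _)) i
  have hNH : (1 - M).IsHermitian := hM1.1
  have hρlam : (ρ - lam • 1).PosSemidef := shift_psd hρH hmin
  have h0 : 0 ≤ ((ρ - lam • 1) * (1 - M)).trace := trace_mul_nonneg_of_psd hρlam hM1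
  have hexp : ((ρ - lam • 1) * (1 - M)).trace = (ρ * (1 - M)).trace - lam • (1 - M).trace := by
    rw [Matrix.sub_mul, Matrix.trace_sub, smul_mul_assoc, Matrix.one_mul, Matrix.trace_smul]
  have h1 : lam * ((1 - M).trace).re ≤ ((ρ * (1 - M)).trace).re := by
    rw [hexp] at h0
    have := (Complex.le_def.mp h0).1
    simp only [Complex.zero_re, Complex.sub_re, Complex.real_smul, Complex.mul_re, Complex.ofReal_re, Complex.ofReal_im] at this
    linarith
  have h2 : ((ρ * (1 - M)).trace).re ≤ ε := by
    have he : (ρ * (1 - M)).trace = 1 - (ρ * M).trace := by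
      rw [Matrix.mul_sub, Matrix.mul_one, Matrix.trace_sub, hρ.2]
    rw [he]
    simp only [Complex.sub_re, Complex.one_re]
    linarith
  have hTr : ((1 - M).trace).re = ∑ i, hNH.eigenvalues i := by
    rw [trace_eq_sum_eig hNH]
    simp
  have hsum : ∑ i, hNH.eigenvalues i ≤ ε / lam := by
    rw [le_div_iff₀ hρfull]
    rw [hTr] at h1
    nlinarith
  have heach : ∀ i, hNH.eigenvalues i ≤ ε / lam := fun i =>
    le_trans (Finset.single_le_sum (fun j _ => hM1.eigenvalues_nonneg j)
      (Finset.mem_univ i)) hsum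
  have final := shift_psd' hNH heach
  have heq : M - (1 - ε / lam) • (1 : Matrix (Fin d) (Fin d) ℂ) =
      (ε / lam) • (1 : Matrix (Fin d) (Fin d) ℂ) - (1 - M) := by
    rw [sub_smul, one_smul]
    abel
  rw [heq]
  exact final
end
end
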